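/- Let $\Phi$ and $\varphi$ be the standard normal c.d.f. and density. Let $\Delta \ge \Delta_x \ge 0$ with $\Delta^2 - \Delta_x^2 \ge \Delta^2/(1+\Lambda)$ for some $\Lambda \ge 0$. Then $\Phi(\Delta/2) - \Phi(\Delta_x/2) \ge \frac{1}{4\sqrt{2\pi}}\cdot\frac{\Delta}{1+\Lambda}\exp(-\Delta^2/8)$. -/

import Mathlib

/-- The standard normal cumulative distribution function. -/
noncomputable def stdNormalCDF (x : ℝ) : ℝ :=
  ∫ t in Set.Iic x, Real.exp (-t ^ 2 / 2) / Real.sqrt (2 * Real.pi)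

lemma gauss_integrable :
    MeasureTheory.Integrable (fun t : ℝ => Real.exp (-t ^ 2 / 2) / Real.sqrt (2 * Real.pi)) := by
  have h : MeasureTheory.Integrable (fun t : ℝ => Real.exp (-(1/2 : ℝ) * t ^ 2)) :=
    integrable_exp_neg_mul_sq (by norm_num)
  have := h.div_const (Real.sqrt (2 * Real.pi))
  convert this using 2 with t
  ring_nf

lemma cdf_diff (a b : ℝ) :
    stdNormalCDF b - stdNormalCDF a
      = ∫ t in a..b, Real.exp (-t ^ 2 / 2) / Real.sqrt (2 * Real.pi) := by
  rw [stdNormalCDF, stdNormalCDF, intervalIntegral.integral_Iic_sub_Iic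
    gauss_integrable.integrableOn gauss_integrable.integrableOn]

/-- Lower bound on the gap of normal CDFs:
`Φ(Δ/2) - Φ(Δx/2) ≥ (1/(4√(2π))) (Δ/(1+Λ)) exp(-Δ²/8)`. -/
theorem stmt11 (Δ Δx Lam : ℝ) (hx0 : 0 ≤ Δx) (hxle : Δx ≤ Δ) (hLam : 0 ≤ Lam)
    (h1 : Δ ^ 2 / (1 + Lam) ≤ Δ ^ 2 - Δx ^ 2) :
    (1 / (4 * Real.sqrt (2 * Real.pi))) * (Δ / (1 + Lam)) * Real.exp (-Δ ^ 2 / 8)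
      ≤ stdNormalCDF (Δ / 2) - stdNormalCDF (Δx / 2) := by
  have hL : (0:ℝ) < 1 + Lam := by linarith
  have hsq : (0:ℝ) < Real.sqrt (2 * Real.pi) :=
    Real.sqrt_pos.mpr (by positivity)
  have hab : Δx / 2 ≤ Δ / 2 := by linarith
  rw [cdf_diff]
  -- pointwise bound
  have hconst : (Δ / 2 - Δx / 2) * (Real.exp (-(Δ/2) ^ 2 / 2) / Real.sqrt (2 * Real.pi))
      ≤ ∫ t in (Δx / 2)..(Δ / 2), Real.exp (-t ^ 2 / 2) / Real.sqrt (2 * Real.pi) := by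
    have := intervalIntegral.integral_mono_on hab
      (intervalIntegrable_const
        (c := Real.exp (-(Δ/2) ^ 2 / 2) / Real.sqrt (2 * Real.pi)))
      gauss_integrable.intervalIntegrable
      (fun t ht => by
        rcases ht with ⟨ht1, ht2⟩
        have h0t : 0 ≤ t := le_trans (by linarith) ht1
        have : (Δ/2) ^ 2 / 2 ≥ t ^ 2 / 2 := by nlinarith
        have hexp : Real.exp (-(Δ/2) ^ 2 / 2) ≤ Real.exp (-t ^ 2 / 2) :=
          Real.exp_le_exp.mpr (by linarith)
        exact div_le_div_of_nonneg_right hexp hsq.le |>.trans_eq rfl)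
    simpa [mul_comm, mul_div_assoc] using this
  refine le_trans ?_ hconst
  have hexp_eq : Real.exp (-(Δ/2) ^ 2 / 2) = Real.exp (-Δ ^ 2 / 8) := by ring_nf
  rw [hexp_eq]
  rcases eq_or_lt_of_le (hx0.trans hxle) with hΔ0 | hΔ0
  · have hx : Δx = 0 := le_antisymm (hΔ0 ▸ hxle) hx0
    rw [← hΔ0, hx]
    simp
  ·
    have h2 : Δ ^ 2 ≤ (Δ ^ 2 - Δx ^ 2) * (1 + Lam) := by
      rw [div_le_iff₀ hL] at h1; linarith
    have h3 : Δ / (2 * (1 + Lam)) ≤ Δ - Δx := by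
      rw [div_le_iff₀ (by positivity)]
      nlinarith [sq_nonneg Δx, mul_nonneg hx0 (hx0.trans hxle)]
    have hpos : 0 ≤ Real.exp (-Δ ^ 2 / 8) / Real.sqrt (2 * Real.pi) := by positivity
    have h4 : (1 / (4 * Real.sqrt (2 * Real.pi))) * (Δ / (1 + Lam)) * Real.exp (-Δ ^ 2 / 8)
        = (Δ / (2 * (1 + Lam)) / 2) * (Real.exp (-Δ ^ 2 / 8) / Real.sqrt (2 * Real.pi)) := by
      field_simp; ring
    rw [h4]
    have : Δ / (2 * (1 + Lam)) / 2 ≤ Δ / 2 - Δx / 2 := by linarith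
    exact mul_le_mul_of_nonneg_right this hpos
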